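/- Let G be a bipartite graph containing no induced P₇ and no induced K_{1,2} + 2K₂ (respecting that these are bipartite forbidden induced subgraphs). Suppose G contains six vertices x₁,y₁,x₂,y₂,x₃,y₃ inducing a perfect matching 3K₂ with edges x_iy_i, where x₁,x₂,x₃ lie in one part. Then every vertex outside these six vertices that has a neighbour in {x₁,x₂,x₃} has at least two neighbours in {x₁,x₂,x₃}. -/

import Mathlib

/-- `F` (a bipartite graph given as a relation between its two parts) occurs as an induced
bipartite subgraph of `E`, with the first part of `F` mapped into the first part of `E`. -/
def BipInduced {α β γ δ : Type*} (F : α → β → Prop) (E : γ → δ → Prop) : Prop :=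
  ∃ (f : α ↪ γ) (g : β ↪ δ), ∀ a b, F a b ↔ E (f a) (g b)

/-- `F` occurs as an induced bipartite subgraph of `E`, in either orientation. -/
def BipContains {α β γ δ : Type*} (F : α → β → Prop) (E : γ → δ → Prop) : Prop :=
  BipInduced F E ∨ BipInduced (fun b a => F a b) E

/-- The chordless path `P₇` as a bipartite graph: vertices `a₀ b₀ a₁ b₁ a₂ b₂ a₃` in order. -/
def P7rel : Fin 4 → Fin 3 → Prop := fun a b => a.val = b.val ∨ a.val = b.val + 1

/-- `K_{1,2} + 2K₂`: the disjoint union of a star with two leaves and two edges. -/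
def K12p2K2rel : Fin 3 → Fin 4 → Prop := fun a b =>
  (a = 0 ∧ (b = 0 ∨ b = 1)) ∨ (a = 1 ∧ b = 2) ∨ (a = 2 ∧ b = 3)

/-- In a `(P₇, K_{1,2}+2K₂)`-free bipartite graph containing an induced matching
`x₁y₁, x₂y₂, x₃y₃`, every vertex outside these six vertices having a neighbour among
`{x₁,x₂,x₃}` has at least two neighbours there. -/
theorem stmt8 {V₁ V₂ : Type*} (E : V₁ → V₂ → Prop)
    (hP7 : ¬ BipContains P7rel E) (hK : ¬ BipContains K12p2K2rel E)
    (x : Fin 3 → V₁) (y : Fin 3 → V₂)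
    (hx : Function.Injective x) (hy : Function.Injective y)
    (hm : ∀ i j, E (x i) (y j) ↔ i = j) :
    ∀ v : V₂, (∀ j, v ≠ y j) → (∃ i, E (x i) v) →
      ∃ i j, i ≠ j ∧ E (x i) v ∧ E (x j) v := by
  intro v hv ⟨i, hEi⟩
  by_contra hno
  push_neg at hno
  have h1 : ∀ j, E (x j) v → j = i := by
    intro j hj
    by_contra hji
    exact hno j i hji hj hEi
  apply hK
  left
  have key : ∀ a : Fin 3, E (x (i + a)) v ↔ a = 0 := by
    intro a
    constructor
    · intro h
      have := h1 _ h
      have : i + a = i + 0 := by simpa using this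
      exact add_left_cancel this
    · rintro rfl; simpa using hEi
  refine ⟨⟨fun a => x (i + a), fun a b hab => add_left_cancel (hx hab)⟩,
    ⟨![v, y i, y (i + 1), y (i + 2)], ?_⟩, ?_⟩
  · intro a b
    fin_cases a <;> fin_cases b <;>
      simp_all [Function.Injective.eq_iff hy, (hv _).symm, hv] <;> decide
  · have hi := i.isLt
    intro a b
    change K12p2K2rel a b ↔ E (x (i + a)) (![v, y i, y (i + 1), y (i + 2)] b)
    fin_cases a <;> fin_cases b <;>
      simp_all [-Fin.val_eq_zero_iff, K12p2K2rel, hm, key, Fin.ext_iff, Fin.val_add, Fin.is_lt] <;> omega
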